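/- arXiv:math/0312418 — 4 statements merged into one kernel-verified Lean document; each statement's English description precedes it below -/
import Mathlib

section
/- For k ≥ 1, the number of non-squashing partitions of n into exactly k parts equals the number of partitions of n into powers of 2 whose largest part is exactly 2^{k-1}. -/
/-- A partition written as a nondecreasing list of positive parts. -/
def IsPartList (l : List ℕ) : Prop :=
  l.Pairwise (· ≤ ·) ∧ ∀ p ∈ l, 0 < p

/-- A partition with distinct parts, written as a strictly increasing list of positive parts. -/
def DistinctPartList (l : List ℕ) : Prop :=
  l.Pairwise (· < ·) ∧ ∀ p ∈ l, 0 < p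

/-- The s-non-squashing condition: (s-1)(p₁+⋯+p_j) ≤ p_{j+1} for 1 ≤ j ≤ k-1. -/
def NSq (s : ℕ) (l : List ℕ) : Prop :=
  ∀ j, 0 < j → j < l.length → (s - 1) * (l.take j).sum ≤ l.getD j 0

/-- Number of non-squashing partitions of n into exactly k parts. -/
noncomputable def a (n k : ℕ) : ℕ :=
  {l : List ℕ | IsPartList l ∧ NSq 2 l ∧ l.sum = n ∧ l.length = k}.ncard

/-! ### Auxiliary definitions -/

def Fb : List ℕ → List ℕ
  | [] => []
  | p :: l => List.replicate (p - l.sum) 1 ++ (Fb l).map (2 * ·)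

def Fr (l : List ℕ) : List ℕ := Fb l.reverse

def Aset (n k : ℕ) : Set (List ℕ) :=
  {l : List ℕ | IsPartList l ∧ NSq 2 l ∧ l.sum = n ∧ l.length = k}

def Bset (n k : ℕ) : Set (List ℕ) :=
  {l : List ℕ | IsPartList l ∧ (∀ p ∈ l, ∃ i, p = 2 ^ i) ∧ l.sum = n ∧
    (2 : ℕ) ^ (k - 1) ∈ l ∧ ∀ p ∈ l, p ≤ 2 ^ (k - 1)}

lemma sum_map_two (l : List ℕ) : (l.map (2 * ·)).sum = 2 * l.sum := by
  induction l with
  | nil => simp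
  | cons x l ih => simp [ih, Nat.mul_add]

lemma Fr_append (l : List ℕ) (p : ℕ) :
    Fr (l ++ [p]) = List.replicate (p - l.sum) 1 ++ (Fr l).map (2 * ·) := by
  simp [Fr, Fb, List.sum_reverse]

lemma mem_le_sum {l : List ℕ} {x : ℕ} (hx : x ∈ l) : x ≤ l.sum :=
  List.single_le_sum (fun _ _ => Nat.zero_le _) x hx

lemma sortedAppend (l l' : List ℕ) :
    (l ++ l').Pairwise (· ≤ ·) ↔ l.Pairwise (· ≤ ·) ∧ l'.Pairwise (· ≤ ·) ∧ ∀ a ∈ l, ∀ b ∈ l', a ≤ b := by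
  simp [List.pairwise_append]

lemma split_ones : ∀ (l : List ℕ), l.Pairwise (· ≤ ·) → (∀ x ∈ l, 0 < x) →
    ∃ r u, l = List.replicate r 1 ++ u ∧ ∀ x ∈ u, 2 ≤ x
  | [], _, _ => ⟨0, [], rfl, by simp⟩
  | x :: l, hs, hp => by
    rcases Nat.lt_or_ge x 2 with hx | hx
    · have hx1 : x = 1 := by have := hp x (by simp); omega
      obtain ⟨r, u, hl, hu⟩ := split_ones l hs.tail (fun y hy => hp y (by simp [hy]))
      exact ⟨r + 1, u, by rw [hx1, hl, List.replicate_succ, List.cons_append], hu⟩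
    · refine ⟨0, x :: l, rfl, ?_⟩
      intro y hy
      rcases List.mem_cons.1 hy with rfl | hy
      · exact hx
      · exact le_trans hx (List.rel_of_pairwise_cons hs hy)

lemma repl_inj {r1 r2 : ℕ} {u1 u2 : List ℕ} (h1 : ∀ x ∈ u1, 2 ≤ x) (h2 : ∀ x ∈ u2, 2 ≤ x)
    (h : List.replicate r1 1 ++ u1 = List.replicate r2 1 ++ u2) : r1 = r2 ∧ u1 = u2 := by
  have c1 : u1.count 1 = 0 := List.count_eq_zero.2 (fun h' => by have := h1 1 h'; omega)
  have c2 : u2.count 1 = 0 := List.count_eq_zero.2 (fun h' => by have := h2 1 h'; omega)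
  have hr : r1 = r2 := by
    have := congrArg (List.count 1) h
    simpa [List.count_append, c1, c2] using this
  exact ⟨hr, (List.append_inj h (by simp [hr])).2⟩

lemma Aset_sum_pos {m k : ℕ} (hk : 1 ≤ k) {l : List ℕ} (hl : l ∈ Aset m k) : 0 < l.sum := by
  obtain ⟨⟨_, hp⟩, _, _, hlen⟩ := hl
  have hne : l ≠ [] := by intro h; rw [h] at hlen; simp at hlen; omega
  obtain ⟨x, hx⟩ := List.exists_mem_of_ne_nil l hne
  exact lt_of_lt_of_le (hp x hx) (mem_le_sum hx)

lemma mem_Aset_succ {n k : ℕ} (hk : 1 ≤ k) {l : List ℕ} :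
    l ∈ Aset n (k + 1) ↔
      ∃ l' p, l = l' ++ [p] ∧ l' ∈ Aset l'.sum k ∧ l'.sum ≤ p ∧ l'.sum + p = n := by
  constructor
  · rintro ⟨⟨hs, hp⟩, hns, hsum, hlen⟩
    have hne : l ≠ [] := by intro h; rw [h] at hlen; simp at hlen
    refine ⟨l.dropLast, l.getLast hne, (List.dropLast_append_getLast hne).symm, ?_, ?_, ?_⟩
    · have hlen' : l.dropLast.length = k := by
        rw [List.length_dropLast, hlen]; rfl
      refine ⟨⟨List.Pairwise.sublist (List.dropLast_sublist l) hs,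
        fun x hx => hp x ((List.dropLast_sublist l).subset hx)⟩, ?_, rfl, hlen'⟩
      intro j hj hjk
      rw [hlen'] at hjk
      have h1 : l.take j = l.dropLast.take j := by
        conv_lhs => rw [← List.dropLast_append_getLast hne]
        rw [List.take_append_of_le_length (by rw [hlen']; omega)]
      have h2 : l.getD j 0 = l.dropLast.getD j 0 := by
        conv_lhs => rw [← List.dropLast_append_getLast hne]
        simp [List.getD_eq_getElem?_getD, List.getElem?_append,
          show j < l.length - 1 by omega]
      rw [← h1, ← h2]
      exact hns j hj (by omega)
    · have := hns k hk (by omega)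
      have h1 : l.take k = l.dropLast := by
        conv_lhs => rw [← List.dropLast_append_getLast hne]
        rw [List.take_append_of_le_length (by rw [List.length_dropLast, hlen]; omega),
          List.take_of_length_le (by rw [List.length_dropLast, hlen]; omega)]
      have h2 : l.getD k 0 = l.getLast hne := by
        conv_lhs => rw [← List.dropLast_append_getLast hne]
        have hlen' : l.dropLast.length = k := by rw [List.length_dropLast, hlen]; rfl
        rw [← hlen']
        simp [List.getD_eq_getElem?_getD, List.getElem?_append]
      rw [h1, h2] at this
      omega
    · conv_rhs => rw [← hsum, ← List.dropLast_append_getLast hne]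
      simp
  · rintro ⟨l', p, rfl, ⟨⟨hs, hp⟩, hns, -, hlen⟩, hle, hsum⟩
    have hppos : 0 < p :=
      lt_of_lt_of_le (Aset_sum_pos hk ⟨⟨hs, hp⟩, hns, rfl, hlen⟩) hle
    refine ⟨⟨?_, ?_⟩, ?_, ?_, ?_⟩
    · rw [sortedAppend]
      exact ⟨hs, List.pairwise_singleton _ p, fun x hx y hy => by
        simp at hy; subst hy; exact le_trans (mem_le_sum hx) hle⟩
    · intro x hx
      rcases List.mem_append.1 hx with hx | hx
      · exact hp x hx
      · simp at hx; omega
    · intro j hj hjlen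
      simp [hlen] at hjlen
      rcases Nat.lt_or_ge j k with hjk | hjk
      · have h1 : (l' ++ [p]).take j = l'.take j :=
          List.take_append_of_le_length (by omega)
        have h2 : (l' ++ [p]).getD j 0 = l'.getD j 0 := by
          simp [List.getD_eq_getElem?_getD, List.getElem?_append, hlen ▸ hjk]
        rw [h1, h2]
        exact hns j hj (by omega)
      · have hj' : j = k := by omega
        subst hj'
        have h1 : (l' ++ [p]).take j = l' := by
          rw [List.take_append_of_le_length (by omega),
            List.take_of_length_le (by omega)]
        have h2 : (l' ++ [p]).getD j 0 = p := by
          rw [← hlen]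
          simp [List.getD_eq_getElem?_getD, List.getElem?_append]
        rw [h1, h2]
        omega
    · simpa using hsum
    · simp [hlen]

lemma mem_Bset_succ {n k : ℕ} (hk : 1 ≤ k) {b : List ℕ} :
    b ∈ Bset n (k + 1) ↔
      ∃ b' r, b = List.replicate r 1 ++ b'.map (2 * ·) ∧ b' ∈ Bset b'.sum k ∧
        r + 2 * b'.sum = n := by
  have hkk : k + 1 - 1 = k := rfl
  constructor
  · rintro ⟨⟨hs, hp⟩, hpow, hsum, hmem, hmax⟩
    rw [hkk] at hmem hmax
    obtain ⟨r, u, hdec, hu⟩ := split_ones b hs hp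
    have humem : ∀ x ∈ u, x ∈ b := fun x hx => hdec ▸ List.mem_append_right _ hx
    have heven : ∀ x ∈ u, 2 * (x / 2) = x := by
      intro x hx
      obtain ⟨i, rfl⟩ := hpow x (humem x hx)
      have hi : 1 ≤ i := by
        by_contra h
        have : i = 0 := by omega
        subst this; have := hu _ hx; simp at this
      have : (2 : ℕ) ^ i = 2 * 2 ^ (i - 1) := by
        conv_lhs => rw [show i = (i - 1) + 1 by omega]
        ring
      rw [this]; omega
    have hu2 : (u.map (· / 2)).map (2 * ·) = u := by
      rw [List.map_map]
      have h' : u.map ((2 * ·) ∘ (· / 2)) = u.map id :=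
        List.map_congr_left (fun x hx => heven x hx)
      rw [h', List.map_id]
    refine ⟨u.map (· / 2), r, ?_, ?_, ?_⟩
    · rw [hdec, hu2]
    · have hsu : u.Pairwise (· ≤ ·) := by
        rw [hdec, sortedAppend] at hs; exact hs.2.1
      refine ⟨⟨?_, ?_⟩, ?_, rfl, ?_, ?_⟩
      · exact List.Pairwise.map _ (fun {x y} h => Nat.div_le_div_right h) hsu
      · intro x hx
        obtain ⟨y, hy, rfl⟩ := List.mem_map.1 hx
        have := hu y hy; omega
      · intro x hx
        obtain ⟨y, hy, rfl⟩ := List.mem_map.1 hx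
        obtain ⟨i, rfl⟩ := hpow y (humem y hy)
        have hi : 1 ≤ i := by
          by_contra h
          have : i = 0 := by omega
          subst this; have := hu _ hy; simp at this
        refine ⟨i - 1, ?_⟩
        have h2 : (2 : ℕ) ^ i = 2 * 2 ^ (i - 1) := by
          conv_lhs => rw [show i = (i - 1) + 1 by omega]
          ring
        rw [h2]; omega
      · have h2k : (2 : ℕ) ^ k ∈ u := by
          rcases List.mem_append.1 (hdec ▸ hmem) with h | h
          · have := List.eq_of_mem_replicate h
            have h2 : (2 : ℕ) ≤ 2 ^ k :=
              le_trans (by norm_num) (Nat.pow_le_pow_right (by norm_num) hk)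
            omega
          · exact h
        refine List.mem_map.2 ⟨2 ^ k, h2k, ?_⟩
        have h2 : (2 : ℕ) ^ k = 2 * 2 ^ (k - 1) := by
          conv_lhs => rw [show k = (k - 1) + 1 by omega]
          ring
        rw [h2]; omega
      · intro x hx
        obtain ⟨y, hy, rfl⟩ := List.mem_map.1 hx
        have hyb := hmax y (humem y hy)
        have h2 : (2 : ℕ) ^ k = 2 * 2 ^ (k - 1) := by
          conv_lhs => rw [show k = (k - 1) + 1 by omega]
          ring
        rw [h2] at hyb; omega
    · have : u.sum = 2 * (u.map (· / 2)).sum := by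
        conv_lhs => rw [← hu2]
        rw [sum_map_two]
      rw [hdec] at hsum
      simp only [List.sum_append, List.sum_replicate, smul_eq_mul, mul_one] at hsum
      omega
  · rintro ⟨b', r, rfl, ⟨⟨hs, hp⟩, hpow, -, hmem, hmax⟩, hsum⟩
    have h2k : (2 : ℕ) ^ k = 2 * 2 ^ (k - 1) := by
      conv_lhs => rw [show k = (k - 1) + 1 by omega]
      ring
    refine ⟨⟨?_, ?_⟩, ?_, ?_, ?_, ?_⟩
    · rw [sortedAppend]
      refine ⟨by simp [List.pairwise_replicate],
        List.Pairwise.map _ (fun {x y} h => by omega) hs, ?_⟩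
      intro x hx y hy
      have hx1 := List.eq_of_mem_replicate hx
      obtain ⟨z, hz, rfl⟩ := List.mem_map.1 hy
      have := hp z hz; omega
    · intro x hx
      rcases List.mem_append.1 hx with h | h
      · have := List.eq_of_mem_replicate h; omega
      · obtain ⟨z, hz, rfl⟩ := List.mem_map.1 h
        have := hp z hz; omega
    · intro x hx
      rcases List.mem_append.1 hx with h | h
      · exact ⟨0, by simpa using List.eq_of_mem_replicate h⟩
      · obtain ⟨z, hz, rfl⟩ := List.mem_map.1 h
        obtain ⟨i, rfl⟩ := hpow z hz
        exact ⟨i + 1, by ring⟩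
    · simp only [List.sum_append, List.sum_replicate, smul_eq_mul, mul_one, sum_map_two]
      omega
    · rw [hkk]
      refine List.mem_append_right _ (List.mem_map.2 ⟨2 ^ (k - 1), hmem, h2k.symm⟩)
    · rw [hkk]
      intro x hx
      rcases List.mem_append.1 hx with h | h
      · have := List.eq_of_mem_replicate h
        have h2 : (1 : ℕ) ≤ 2 ^ k := Nat.one_le_two_pow
        omega
      · obtain ⟨z, hz, rfl⟩ := List.mem_map.1 h
        have := hmax z hz; omega

lemma mem_Aset_one {n : ℕ} {l : List ℕ} : l ∈ Aset n 1 ↔ l = [n] ∧ 0 < n := by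
  constructor
  · rintro ⟨⟨hs, hp⟩, hns, hsum, hlen⟩
    obtain ⟨x, rfl⟩ := List.length_eq_one_iff.1 hlen
    simp at hsum
    subst hsum
    exact ⟨rfl, hp _ (by simp)⟩
  · rintro ⟨rfl, hn⟩
    refine ⟨⟨List.pairwise_singleton _ n, by simpa using hn⟩, ?_, by simp, rfl⟩
    intro j hj hjl
    simp at hjl; omega

lemma mem_Bset_one {n : ℕ} {l : List ℕ} : l ∈ Bset n 1 ↔ l = List.replicate n 1 ∧ 0 < n := by
  constructor
  · rintro ⟨⟨hs, hp⟩, hpow, hsum, hmem, hmax⟩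
    simp only [show (2:ℕ) ^ (1 - 1) = 1 from rfl] at hmem hmax
    have hall : ∀ x ∈ l, x = 1 := fun x hx => le_antisymm (hmax x hx) (hp x hx)
    have hlrep : l = List.replicate l.length 1 :=
      List.eq_replicate_iff.2 ⟨rfl, hall⟩
    have hlens : l.sum = l.length := by
      rw [hlrep]; simp
    constructor
    · rw [hlrep, hlens.symm.trans hsum]
    · have hne : l ≠ [] := List.ne_nil_of_mem hmem
      have : 0 < l.length := List.length_pos_iff.2 hne
      omega
  · rintro ⟨rfl, hn⟩
    refine ⟨⟨by simp [List.pairwise_replicate], ?_⟩, ?_, by simp, ?_, ?_⟩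
    · intro x hx; have := List.eq_of_mem_replicate hx; omega
    · intro x hx; exact ⟨0, by simpa using List.eq_of_mem_replicate hx⟩
    · show (2:ℕ) ^ (1 - 1) ∈ List.replicate n 1
      rw [show (2:ℕ) ^ (1 - 1) = 1 from rfl]
      exact List.mem_replicate.2 ⟨by omega, rfl⟩
    · intro x hx; have := List.eq_of_mem_replicate hx; omega

lemma key : ∀ k, 1 ≤ k → ∀ n, Set.BijOn Fr (Aset n k) (Bset n k) := by
  intro k
  induction k with
  | zero => omega
  | succ k ih =>
    intro _ n
    rcases Nat.eq_zero_or_pos k with rfl | hk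
    · -- base case k + 1 = 1
      refine ⟨?_, ?_, ?_⟩
      · intro l hl
        obtain ⟨rfl, hn⟩ := mem_Aset_one.1 hl
        have : Fr [n] = List.replicate n 1 := by simp [Fr, Fb]
        rw [this]
        exact mem_Bset_one.2 ⟨rfl, hn⟩
      · intro l1 h1 l2 h2 _
        rw [(mem_Aset_one.1 h1).1, (mem_Aset_one.1 h2).1]
      · intro b hb
        obtain ⟨rfl, hn⟩ := mem_Bset_one.1 hb
        exact ⟨[n], mem_Aset_one.2 ⟨rfl, hn⟩, by simp [Fr, Fb]⟩
    · have ih := ih hk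
      refine ⟨?_, ?_, ?_⟩
      · intro l hl
        obtain ⟨l', p, rfl, hl', hle, hsum⟩ := (mem_Aset_succ hk).1 hl
        have hb := (ih l'.sum).mapsTo hl'
        have hbs : (Fr l').sum = l'.sum := hb.2.2.1
        rw [Fr_append]
        exact (mem_Bset_succ hk).2 ⟨Fr l', p - l'.sum, rfl, by rwa [hbs], by omega⟩
      · intro l1 hm1 l2 hm2 heq
        obtain ⟨l1', p1, rfl, hl1, hle1, hs1⟩ := (mem_Aset_succ hk).1 hm1
        obtain ⟨l2', p2, rfl, hl2, hle2, hs2⟩ := (mem_Aset_succ hk).1 hm2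
        simp only [Fr_append] at heq
        have hb1 := (ih l1'.sum).mapsTo hl1
        have hb2 := (ih l2'.sum).mapsTo hl2
        have h2u1 : ∀ x ∈ (Fr l1').map (2 * ·), 2 ≤ x := by
          intro x hx
          obtain ⟨y, hy, rfl⟩ := List.mem_map.1 hx
          have := hb1.1.2 y hy; omega
        have h2u2 : ∀ x ∈ (Fr l2').map (2 * ·), 2 ≤ x := by
          intro x hx
          obtain ⟨y, hy, rfl⟩ := List.mem_map.1 hx
          have := hb2.1.2 y hy; omega
        obtain ⟨hr, hu⟩ := repl_inj h2u1 h2u2 heq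
        have hF : Fr l1' = Fr l2' :=
          List.map_injective_iff.2 (fun a b h => by omega) hu
        have hsums : l1'.sum = l2'.sum := by
          rw [← hb1.2.2.1, ← hb2.2.2.1, hF]
        have hl2' : l2' ∈ Aset l1'.sum k := by rw [hsums]; exact hl2
        have hll : l1' = l2' := (ih l1'.sum).injOn hl1 hl2' hF
        have hpp : p1 = p2 := by omega
        rw [hll, hpp]
      · intro b hb
        obtain ⟨b', r, rfl, hb', hsum⟩ := (mem_Bset_succ hk).1 hb
        obtain ⟨l', hl', hFl⟩ := (ih b'.sum).surjOn hb'
        have hls : l'.sum = b'.sum := hl'.2.2.1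
        refine ⟨l' ++ [l'.sum + r], ?_, ?_⟩
        · refine (mem_Aset_succ hk).2 ⟨l', l'.sum + r, rfl, ?_, by omega, by omega⟩
          rw [hls]
          exact hl'
        · rw [Fr_append, hFl]
          congr 1
          congr 1
          omega

theorem stmt_14 (n k : ℕ) (hk : 1 ≤ k) :
    a n k = {l : List ℕ | IsPartList l ∧ (∀ p ∈ l, ∃ i, p = 2 ^ i) ∧ l.sum = n ∧
      (2 : ℕ) ^ (k - 1) ∈ l ∧ ∀ p ∈ l, p ≤ 2 ^ (k - 1)}.ncard := by
  have h := key k hk n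
  show (Aset n k).ncard = (Bset n k).ncard
  rw [← h.image_eq, Set.ncard_image_of_injOn h.injOn]
end

section
/- The number of non-squashing partitions of n into exactly 3 parts equals ⌊n/4⌋·⌈n/4⌉ when n is even (the quarter-square of n/2); more precisely a(2m,3) = ⌊m/2⌋·⌈m/2⌉ for all m ≥ 0. -/
def Fm (m : ℕ) : Finset (ℕ × ℕ) :=
  (Finset.range (m+1) ×ˢ Finset.range (m+1)).filter
    fun p => 1 ≤ p.1 ∧ p.1 ≤ p.2 ∧ p.1 + p.2 ≤ m

lemma mem_Fm {m : ℕ} {p : ℕ × ℕ} :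
    p ∈ Fm m ↔ 1 ≤ p.1 ∧ p.1 ≤ p.2 ∧ p.1 + p.2 ≤ m := by
  simp only [Fm, Finset.mem_filter, Finset.mem_product, Finset.mem_range]
  omega

def Dm (s : ℕ) : Finset (ℕ × ℕ) :=
  (Finset.Icc 1 (s/2)).image fun a => (a, s - a)

lemma mem_Dm {s : ℕ} {p : ℕ × ℕ} :
    p ∈ Dm s ↔ 1 ≤ p.1 ∧ p.1 ≤ p.2 ∧ p.1 + p.2 = s := by
  obtain ⟨a, b⟩ := p
  simp only [Dm, Finset.mem_image, Finset.mem_Icc, Prod.mk.injEq]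
  constructor
  · rintro ⟨c, ⟨h1, h2⟩, rfl, rfl⟩
    omega
  · rintro ⟨h1, h2, h3⟩
    exact ⟨a, ⟨h1, by omega⟩, rfl, by omega⟩

lemma card_Dm (s : ℕ) : (Dm s).card = s / 2 := by
  rw [Dm, Finset.card_image_of_injOn (fun x _ y _ h => (Prod.mk.injEq _ _ _ _).mp h |>.1)]
  simp

lemma Fm_eq (m : ℕ) : Fm m = (Finset.range (m+1)).biUnion Dm := by
  ext ⟨x, y⟩
  simp only [mem_Fm, Finset.mem_biUnion, Finset.mem_range, mem_Dm]
  constructor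
  · rintro ⟨h1, h2, h3⟩
    exact ⟨x + y, by omega, h1, h2, rfl⟩
  · rintro ⟨s, hs, h1, h2, h3⟩
    omega

lemma sum_halves (m : ℕ) : ∑ s ∈ Finset.range (m+1), s / 2 = m / 2 * ((m + 1) / 2) := by
  induction m with
  | zero => simp
  | succ k ih =>
    rw [Finset.sum_range_succ, ih, show (k + 1 + 1) / 2 = k / 2 + 1 from by omega,
      Nat.mul_succ, Nat.mul_comm]

lemma card_Fm (m : ℕ) : (Fm m).card = m / 2 * ((m + 1) / 2) := by
  rw [Fm_eq, Finset.card_biUnion]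
  · rw [Finset.sum_congr rfl fun s _ => card_Dm s, sum_halves]
  · intro s _ t _ hst
    refine Finset.disjoint_left.mpr fun p hp hq => hst ?_
    rw [← (mem_Dm.mp hp).2.2, (mem_Dm.mp hq).2.2]

theorem stmt_15 (m : ℕ) : a (2 * m) 3 = (m / 2) * ((m + 1) / 2) := by
  have hset : {l : List ℕ | IsPartList l ∧ NSq 2 l ∧ l.sum = 2 * m ∧ l.length = 3}
      = ↑((Fm m).image fun p => [p.1, p.2, 2 * m - p.1 - p.2]) := by
    ext l
    simp only [Set.mem_setOf_eq, Finset.coe_image, Set.mem_image, Finset.mem_coe, mem_Fm]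
    constructor
    · rintro ⟨⟨hsort, hpos⟩, hnsq, hsum, hlen⟩
      obtain ⟨x, y, z, rfl⟩ : ∃ x y z, l = [x, y, z] := by
        match l, hlen with
        | [x, y, z], _ => exact ⟨x, y, z, rfl⟩
      have h1 := hnsq 1 (by norm_num) (by simp)
      have h2 := hnsq 2 (by norm_num) (by simp)
      simp at h1 h2
      simp only [List.sum_cons, List.sum_nil] at hsum
      have hx : 0 < x := hpos x (by simp)
      refine ⟨(x, y), ⟨hx, by omega, by omega⟩, ?_⟩
      show [x, y, 2 * m - x - y] = [x, y, z]
      simp only [List.cons.injEq, true_and, and_true]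
      omega
    · rintro ⟨⟨x, y⟩, ⟨h1, h2, h3⟩, rfl⟩
      simp only at *
      refine ⟨⟨?_, ?_⟩, ?_, ?_, rfl⟩
      · simp only [List.pairwise_cons, List.mem_cons, List.not_mem_nil]
        constructor
        · rintro b hb; simp at hb; omega
        · constructor
          · rintro b hb; simp at hb; omega
          · simp
      · intro p hp; simp at hp; omega
      · intro j hj hj'
        simp only [List.length] at hj'
        interval_cases j <;> simp <;> omega
      · simp; omega
  rw [a, hset, Set.ncard_coe_finset,
    Finset.card_image_of_injective _ (fun p q h => ?_), card_Fm]
  obtain ⟨a, b⟩ := p; obtain ⟨c, d⟩ := q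
  simp only [List.cons.injEq, Prod.mk.injEq] at h ⊢
  exact ⟨h.1, h.2.1⟩
end

section
/- If c(n,m) denotes the number of non-squashing partitions of n into distinct parts whose greatest part is m, then c(n,m) = 0 whenever m < n/2 or n < m; and for m ≤ n ≤ 2m, c(n,m) = b(n-m) if n < 2m and c(n,m) = b(n-m) - 1 if n = 2m, where b is the number of non-squashing partitions into distinct parts. -/
/-- Number of non-squashing partitions of n into distinct parts. -/
noncomputable def b (n : ℕ) : ℕ :=
  {l : List ℕ | DistinctPartList l ∧ NSq 2 l ∧ l.sum = n}.ncard

/-- Number of non-squashing partitions of n into distinct parts with greatest part m. -/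
noncomputable def c (n m : ℕ) : ℕ :=
  {l : List ℕ | DistinctPartList l ∧ NSq 2 l ∧ l.sum = n ∧ m ∈ l ∧ ∀ p ∈ l, p ≤ m}.ncard

lemma nsq_append (l : List ℕ) (m : ℕ) :
    NSq 2 (l ++ [m]) ↔ NSq 2 l ∧ l.sum ≤ m := by
  constructor
  · intro h
    constructor
    · intro j hj hjl
      have := h j hj (by simp; omega)
      rwa [List.take_append_of_le_length hjl.le, List.getD_append _ _ _ _ hjl] at this
    · rcases eq_or_ne l [] with rfl | hne
      · simp
      · have hlen : 0 < l.length := List.length_pos_iff.2 hne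
        have := h l.length hlen (by simp)
        rw [List.take_left, List.getD_append_right _ _ _ _ le_rfl, Nat.sub_self] at this
        simpa using this
  · rintro ⟨h1, h2⟩ j hj hjl
    rcases lt_or_ge j l.length with hlt | hge
    · rw [List.take_append_of_le_length hlt.le, List.getD_append _ _ _ _ hlt]
      exact h1 j hj hlt
    · have hj' : j = l.length := by simp at hjl; omega
      subst hj'
      rw [List.take_left, List.getD_append_right _ _ _ _ le_rfl, Nat.sub_self]
      simpa using h2

lemma exists_decomp {l : List ℕ} {m : ℕ} (hsort : l.Pairwise (· < ·)) (hmem : m ∈ l)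
    (hmax : ∀ p ∈ l, p ≤ m) : ∃ l', l = l' ++ [m] ∧ ∀ p ∈ l', p < m := by
  have hne : l ≠ [] := List.ne_nil_of_mem hmem
  have hdecomp := List.dropLast_append_getLast hne
  have hlastmem : l.getLast hne ∈ l := List.getLast_mem hne
  have hlt : ∀ p ∈ l.dropLast, p < l.getLast hne := by
    intro p hp
    rw [← hdecomp] at hsort
    exact (List.pairwise_append.1 hsort).2.2 p hp _ (by simp)
  have hlast : l.getLast hne = m := by
    refine le_antisymm (hmax _ hlastmem) ?_
    rw [← hdecomp] at hmem
    rcases List.mem_append.1 hmem with h | h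
    · exact (hlt m h).le
    · simp at h; omega
  exact ⟨l.dropLast, by rw [← hlast]; exact hdecomp.symm, fun p hp => hlast ▸ hlt p hp⟩

lemma bset_finite (k : ℕ) :
    {l : List ℕ | DistinctPartList l ∧ NSq 2 l ∧ l.sum = k}.Finite := by
  apply Set.Finite.subset (List.finite_toSet ((List.range (k+1)).sublists))
  rintro l ⟨⟨hs, _⟩, _, hsum⟩
  show l ∈ (List.range (k+1)).sublists
  rw [List.mem_sublists]
  refine List.sublist_of_subperm_of_pairwise (r := (· ≤ ·)) ?_ (hs.imp le_of_lt)
    List.pairwise_le_range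
  exact hs.nodup.subperm fun p hp =>
    List.mem_range.2 (lt_of_le_of_lt (hsum ▸ List.le_sum_of_mem hp) (Nat.lt_succ_self k))

lemma cset_eq (n m : ℕ) (hm : 1 ≤ m) (h1 : m ≤ n) (h2 : n ≤ 2 * m) :
    {l : List ℕ | DistinctPartList l ∧ NSq 2 l ∧ l.sum = n ∧ m ∈ l ∧ ∀ p ∈ l, p ≤ m}
      = (· ++ [m]) '' ({l : List ℕ | DistinctPartList l ∧ NSq 2 l ∧ l.sum = n - m} \ {[m]}) := by
  ext l
  constructor
  · rintro ⟨⟨hsort, hpos⟩, hnsq, hsum, hmem, hmax⟩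
    obtain ⟨l', rfl, hlt⟩ := exists_decomp hsort hmem hmax
    have hps := List.pairwise_append.1 hsort
    have hsum' : l'.sum = n - m := by
      have : l'.sum + m = n := by simpa using hsum
      omega
    refine ⟨l', ⟨⟨⟨hps.1, fun p hp => hpos p (by simp [hp])⟩,
      ((nsq_append l' m).1 hnsq).1, hsum'⟩, ?_⟩, rfl⟩
    rintro rfl
    exact absurd (hlt m (by simp)) (lt_irrefl m)
  · rintro ⟨l', ⟨⟨⟨hsort, hpos⟩, hnsq, hsum⟩, hne⟩, rfl⟩
    have hlt : ∀ p ∈ l', p < m := by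
      intro p hp
      have hle : p ≤ l'.sum := List.le_sum_of_mem hp
      rcases lt_or_eq_of_le (hle.trans (hsum ▸ (by omega : n - m ≤ m))) with h | h
      · exact h
      · exfalso
        -- p = m, so l'.sum = m and p = l'.sum, forcing l' = [m]
        have hps : p = l'.sum := by omega
        obtain ⟨s, t, rfl⟩ := List.append_of_mem hp
        have hsz : s.sum = 0 ∧ t.sum = 0 := by
          simp [List.sum_append] at hps; omega
        have hsnil : s = [] := by
          rcases s with _ | ⟨a, s⟩
          · rfl
          · exfalso
            have := hpos a (by simp)
            have : a = 0 := by
              have := hsz.1; simp at this; omega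
            omega
        have htnil : t = [] := by
          rcases t with _ | ⟨a, t⟩
          · rfl
          · exfalso
            have := hpos a (by simp)
            have : a = 0 := by
              have := hsz.2; simp at this; omega
            omega
        subst hsnil htnil
        exact hne (by simp [h])
    refine ⟨⟨?_, ?_⟩, (nsq_append l' m).2 ⟨hnsq, by omega⟩, by simp [hsum]; omega,
      by simp, ?_⟩
    · exact List.pairwise_append.2 ⟨hsort, List.pairwise_singleton _ _,
        fun a ha b hb => by simp at hb; subst hb; exact hlt a ha⟩
    · intro p hp
      rcases List.mem_append.1 hp with h | h
      · exact hpos p h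
      · simp at h; omega
    · intro p hp
      rcases List.mem_append.1 hp with h | h
      · exact (hlt p h).le
      · simp at h; omega

theorem stmt_17 (n m : ℕ) (hm : 1 ≤ m) :
    (2 * m < n → c n m = 0) ∧
    (n < m → c n m = 0) ∧
    (m ≤ n → n < 2 * m → c n m = b (n - m)) ∧
    (n = 2 * m → c n m = b m - 1) := by
  refine ⟨?_, ?_, ?_, ?_⟩
  · intro h
    have : {l : List ℕ | DistinctPartList l ∧ NSq 2 l ∧ l.sum = n ∧ m ∈ l ∧ ∀ p ∈ l, p ≤ m}
        = ∅ := by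
      ext l
      simp only [Set.mem_setOf_eq, Set.mem_empty_iff_false, iff_false]
      rintro ⟨⟨hsort, _⟩, hnsq, hsum, hmem, hmax⟩
      obtain ⟨l', rfl, _⟩ := exists_decomp hsort hmem hmax
      have h1 := ((nsq_append l' m).1 hnsq).2
      simp [List.sum_append] at hsum
      omega
    rw [c, this, Set.ncard_empty]
  · intro h
    have : {l : List ℕ | DistinctPartList l ∧ NSq 2 l ∧ l.sum = n ∧ m ∈ l ∧ ∀ p ∈ l, p ≤ m}
        = ∅ := by
      ext l
      simp only [Set.mem_setOf_eq, Set.mem_empty_iff_false, iff_false]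
      rintro ⟨_, _, hsum, hmem, _⟩
      have := List.le_sum_of_mem hmem
      omega
    rw [c, this, Set.ncard_empty]
  · intro h1 h2
    rw [c, cset_eq n m hm h1 h2.le,
      Set.ncard_image_of_injective _ (fun a b hab => by simpa using hab),
      Set.diff_singleton_eq_self]
    · rfl
    · intro hmem
      have : ([m] : List ℕ).sum = n - m := hmem.2.2
      simp at this
      omega
  · rintro rfl
    have hnm : 2 * m - m = m := by omega
    rw [c, cset_eq (2 * m) m hm (by omega) le_rfl,
      Set.ncard_image_of_injective _ (fun a b hab => by simpa using hab), hnm,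
      Set.ncard_diff_singleton_of_mem ?_]
    · rfl
    · exact ⟨⟨List.pairwise_singleton _ m, by simp; omega⟩,
        fun j hj hjl => by simp at hjl; omega, by simp⟩
end

section
/- The number of non-squashing partitions into distinct parts whose largest part equals exactly n is equal to b(2n), the number of non-squashing partitions of 2n into distinct parts; equivalently, f(n) - f(n-1) = b(2n) for n ≥ 1, where f(n) counts non-squashing partitions into distinct parts all at most n. -/
/-- Number of non-squashing partitions (of any number) into distinct parts, all parts ≤ n. -/
noncomputable def f (n : ℕ) : ℕ :=
  {l : List ℕ | DistinctPartList l ∧ NSq 2 l ∧ ∀ p ∈ l, p ≤ n}.ncard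

lemma nsq2_concat (g : List ℕ) (m : ℕ) : NSq 2 (g ++ [m]) ↔ NSq 2 g ∧ g.sum ≤ m := by
  constructor
  · intro h
    refine ⟨fun j hj hjl => ?_, ?_⟩
    · have := h j hj (by simp; omega)
      rwa [List.take_append_of_le_length (by omega), List.getD_append _ _ _ _ hjl] at this
    · rcases eq_or_ne g [] with rfl | hne
      · simp
      · have hl : 0 < g.length := List.length_pos_iff.2 hne
        have := h g.length hl (by simp)
        rw [List.take_append_of_le_length le_rfl, List.take_length,
          List.getD_append_right _ _ _ _ le_rfl, Nat.sub_self] at this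
        simpa using this
  · rintro ⟨h1, h2⟩ j hj hjl
    simp only [List.length_append, List.length_singleton] at hjl
    rcases lt_or_ge j g.length with hlt | hge
    · rw [List.take_append_of_le_length hlt.le, List.getD_append _ _ _ _ hlt]
      exact h1 j hj hlt
    · have hj' : j = g.length := by omega
      subst hj'
      rw [List.take_append_of_le_length le_rfl, List.take_length,
        List.getD_append_right _ _ _ _ le_rfl, Nat.sub_self]
      simpa using h2

lemma sortedLT_finite (N : ℕ) : {l : List ℕ | l.Pairwise (· < ·) ∧ ∀ p ∈ l, p ≤ N}.Finite := by
  have hinj : Set.InjOn List.toFinset {l : List ℕ | l.Pairwise (· < ·) ∧ ∀ p ∈ l, p ≤ N} := by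
    rintro l1 ⟨h1, _⟩ l2 ⟨h2, _⟩ heq
    exact List.Perm.eq_of_pairwise (fun _ _ _ _ h h' => absurd h (not_lt.2 h'.le)) h1 h2
      (List.perm_of_nodup_nodup_toFinset_eq h1.nodup h2.nodup heq)
  have hfin : (List.toFinset '' {l : List ℕ | l.Pairwise (· < ·) ∧ ∀ p ∈ l, p ≤ N}).Finite := by
    apply Set.Finite.subset ((Finset.range (N + 1)).powerset : Finset (Finset ℕ)).finite_toSet
    rintro s ⟨l, ⟨_, hle⟩, rfl⟩
    simp only [Finset.coe_powerset, Set.mem_preimage, Set.mem_powerset_iff, Finset.coe_range]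
    intro x hx
    simp only [List.coe_toFinset, Set.mem_setOf_eq] at hx
    exact Set.mem_Iio.2 (Nat.lt_succ_of_le (hle x hx))
  exact Set.Finite.of_finite_image hfin hinj

/-- the set of "front" lists -/
def Aux (n : ℕ) : Set (List ℕ) :=
  {g | DistinctPartList g ∧ NSq 2 g ∧ g.sum ≤ n ∧ ∀ p ∈ g, p < n}

lemma sorted_concat_iff {g : List ℕ} {m : ℕ} :
    (g ++ [m]).Pairwise (· < ·) ↔ g.Pairwise (· < ·) ∧ ∀ p ∈ g, p < m := by
  constructor
  · intro h
    rw [List.pairwise_append] at h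
    exact ⟨h.1, fun p hp => h.2.2 p hp m (List.mem_singleton_self m)⟩
  · rintro ⟨h1, h2⟩
    rw [List.pairwise_append]
    exact ⟨h1, List.pairwise_singleton _ _, fun a ha b hb => by
      rw [List.mem_singleton] at hb; subst hb; exact h2 a ha⟩

lemma bijA (n : ℕ) (hn : 1 ≤ n) :
    Set.BijOn (· ++ [n]) (Aux n)
      {l : List ℕ | DistinctPartList l ∧ NSq 2 l ∧ n ∈ l ∧ ∀ p ∈ l, p ≤ n} := by
  refine ⟨?_, ?_, ?_⟩
  · rintro g ⟨⟨hs, hp⟩, hnsq, hsum, hlt⟩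
    refine ⟨⟨sorted_concat_iff.2 ⟨hs, hlt⟩, ?_⟩, (nsq2_concat g n).2 ⟨hnsq, hsum⟩, ?_, ?_⟩
    · intro p hp'
      rcases List.mem_append.1 hp' with h | h
      · exact hp p h
      · rw [List.mem_singleton] at h; omega
    · exact List.mem_append.2 (Or.inr (List.mem_singleton_self n))
    · intro p hp'
      rcases List.mem_append.1 hp' with h | h
      · exact (hlt p h).le
      · rw [List.mem_singleton] at h; omega
  · intro g1 _ g2 _ heq
    have := congrArg List.dropLast heq
    simpa [List.dropLast_concat] using this
  · rintro l ⟨⟨hs, hp⟩, hnsq, hmem, hle⟩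
    have hne : l ≠ [] := List.ne_nil_of_mem hmem
    set g := l.dropLast with hg
    have hdec : g ++ [l.getLast hne] = l := List.dropLast_append_getLast hne
    have hsort : g.Pairwise (· < ·) ∧ ∀ p ∈ g, p < l.getLast hne := by
      rw [← hdec] at hs; exact sorted_concat_iff.1 hs
    have hlast : l.getLast hne = n := by
      have h1 : l.getLast hne ≤ n := hle _ (List.getLast_mem hne)
      rcases List.mem_append.1 (hdec ▸ hmem) with h | h
      · have := hsort.2 n h; omega
      · rw [List.mem_singleton] at h; omega
    rw [hlast] at hsort hdec
    have hnsq' : NSq 2 g ∧ g.sum ≤ n := (nsq2_concat g n).1 (hdec ▸ hnsq)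
    refine ⟨g, ⟨⟨hsort.1, fun p hp' => hp p (hdec ▸ List.mem_append.2 (Or.inl hp'))⟩,
      hnsq'.1, hnsq'.2, hsort.2⟩, hdec⟩

lemma bijB (n : ℕ) (hn : 1 ≤ n) :
    Set.BijOn (fun g => g ++ [2 * n - g.sum]) (Aux n)
      {l : List ℕ | DistinctPartList l ∧ NSq 2 l ∧ l.sum = 2 * n} := by
  refine ⟨?_, ?_, ?_⟩
  · rintro g ⟨⟨hs, hp⟩, hnsq, hsum, hlt⟩
    have hm : n ≤ 2 * n - g.sum := by omega
    refine ⟨⟨sorted_concat_iff.2 ⟨hs, fun p hp' => by have := hlt p hp'; omega⟩, ?_⟩,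
      (nsq2_concat g _).2 ⟨hnsq, by omega⟩, ?_⟩
    · intro p hp'
      rcases List.mem_append.1 hp' with h | h
      · exact hp p h
      · rw [List.mem_singleton] at h; omega
    · simp only [List.sum_append, List.sum_singleton]; omega
  · intro g1 _ g2 _ heq
    have := congrArg List.dropLast heq
    simpa [List.dropLast_concat] using this
  · rintro l ⟨⟨hs, hp⟩, hnsq, hsum⟩
    have hne : l ≠ [] := by
      rintro rfl; simp at hsum; omega
    set g := l.dropLast with hg
    set m := l.getLast hne with hm
    have hdec : g ++ [m] = l := List.dropLast_append_getLast hne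
    have hsort : g.Pairwise (· < ·) ∧ ∀ p ∈ g, p < m := by
      rw [← hdec] at hs; exact sorted_concat_iff.1 hs
    have hnsq' : NSq 2 g ∧ g.sum ≤ m := (nsq2_concat g m).1 (hdec ▸ hnsq)
    have hsum' : g.sum + m = 2 * n := by
      rw [← hdec] at hsum; simpa using hsum
    have hlt : ∀ p ∈ g, p < n := by
      intro p hp'
      have h1 : p < m := hsort.2 p hp'
      have h2 : p ≤ g.sum := List.single_le_sum (fun x _ => Nat.zero_le x) p hp'
      omega
    refine ⟨g, ⟨⟨hsort.1, fun p hp' => hp p (hdec ▸ List.mem_append.2 (Or.inl hp'))⟩,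
      hnsq'.1, by omega, hlt⟩, ?_⟩
    show g ++ [2 * n - g.sum] = l
    have h : 2 * n - g.sum = m := by omega
    rw [h]; exact hdec

theorem stmt_18 (n : ℕ) (hn : 1 ≤ n) :
    {l : List ℕ | DistinctPartList l ∧ NSq 2 l ∧ n ∈ l ∧ ∀ p ∈ l, p ≤ n}.ncard = b (2 * n) ∧
    f n - f (n - 1) = b (2 * n) := by
  have hA : {l : List ℕ | DistinctPartList l ∧ NSq 2 l ∧ n ∈ l ∧ ∀ p ∈ l, p ≤ n}.ncard
      = (Aux n).ncard := by
    rw [← (bijA n hn).image_eq, Set.ncard_image_of_injOn (bijA n hn).injOn]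
  have hB : b (2 * n) = (Aux n).ncard := by
    rw [b, ← (bijB n hn).image_eq, Set.ncard_image_of_injOn (bijB n hn).injOn]
  have h1 : {l : List ℕ | DistinctPartList l ∧ NSq 2 l ∧ n ∈ l ∧ ∀ p ∈ l, p ≤ n}.ncard
      = b (2 * n) := by rw [hA, hB]
  refine ⟨h1, ?_⟩
  have hunion : {l : List ℕ | DistinctPartList l ∧ NSq 2 l ∧ ∀ p ∈ l, p ≤ n}
      = {l : List ℕ | DistinctPartList l ∧ NSq 2 l ∧ ∀ p ∈ l, p ≤ n - 1} ∪
        {l : List ℕ | DistinctPartList l ∧ NSq 2 l ∧ n ∈ l ∧ ∀ p ∈ l, p ≤ n} := by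
    ext l
    simp only [Set.mem_setOf_eq, Set.mem_union]
    constructor
    · rintro ⟨hd, hq, hle⟩
      by_cases hmem : n ∈ l
      · exact Or.inr ⟨hd, hq, hmem, hle⟩
      · refine Or.inl ⟨hd, hq, fun p hp => ?_⟩
        have := hle p hp
        have : p ≠ n := fun h => hmem (h ▸ hp)
        omega
    · rintro (⟨hd, hq, hle⟩ | ⟨hd, hq, _, hle⟩)
      · exact ⟨hd, hq, fun p hp => by have := hle p hp; omega⟩
      · exact ⟨hd, hq, hle⟩
  have hdisj : Disjoint {l : List ℕ | DistinctPartList l ∧ NSq 2 l ∧ ∀ p ∈ l, p ≤ n - 1}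
      {l : List ℕ | DistinctPartList l ∧ NSq 2 l ∧ n ∈ l ∧ ∀ p ∈ l, p ≤ n} := by
    rw [Set.disjoint_left]
    rintro l ⟨_, _, hle⟩ ⟨_, _, hmem, _⟩
    have := hle n hmem; omega
  have hf1 : {l : List ℕ | DistinctPartList l ∧ NSq 2 l ∧ ∀ p ∈ l, p ≤ n - 1}.Finite :=
    (sortedLT_finite n).subset (fun l ⟨⟨hs, _⟩, _, hle⟩ =>
      ⟨hs, fun p hp => by have := hle p hp; omega⟩)
  have hf2 : {l : List ℕ | DistinctPartList l ∧ NSq 2 l ∧ n ∈ l ∧ ∀ p ∈ l, p ≤ n}.Finite :=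
    (sortedLT_finite n).subset (fun l ⟨⟨hs, _⟩, _, _, hle⟩ => ⟨hs, hle⟩)
  have key : f n = f (n - 1) + b (2 * n) := by
    rw [f, f, hunion, Set.ncard_union_eq hdisj hf1 hf2, h1]
  omega
end
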